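/- Theorem 3.4 (algebraic formula for Model 4, substitution form): For every (i,j,k) ∈ ℤ³, one has Z₄(i,j,k) = X'_{r(i,j,k)} · (A')^{α(i,j,k)} (B')^{β(i,j,k)} (C')^{γ(i,j,k)} (D')^{δ(i,j,k)} (E')^{ε(i,j,k)} in F; that is, the Model 4 closed formula Z₄(i,j,k) equals the Model 1 closed formula of Theorem 3.1 with x₁ replaced throughout by Y₁'' = (x₆⁴+x₁x₂x₃x₆+2x₄x₅x₆²+x₄²x₅²)/(x₁x₃x₄), x₃ replaced by Y₃'' = (x₄x₅+x₆²)/x₃, x₄ replaced by Y₄'' = (x₁x₂x₃+x₄x₅x₆+x₆³)/(x₃x₄), and x₂,x₅,x₆ left unchanged. -/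

import Mathlib

noncomputable section

open MvPolynomial

abbrev F : Type := FractionRing (MvPolynomial (Fin 6) ℚ)

/-- The images of the six indeterminates in the field `F = ℚ(x₁,…,x₆)`. -/
def xv (t : Fin 6) : F := algebraMap (MvPolynomial (Fin 6) ℚ) F (X t)

def x1 : F := xv 0
def x2 : F := xv 1
def x3 : F := xv 2
def x4 : F := xv 3
def x5 : F := xv 4
def x6 : F := xv 5

/-- Chooses among six field elements according to the residue of `2(i-j)+3k` mod 6:
residues 5,2,4,1,3,0 select the 1st,…,6th element respectively. -/
def pick (v1 v2 v3 v4 v5 v6 : F) (i j k : ℤ) : F :=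
  if (2*(i-j)+3*k) % 6 = 5 then v1
  else if (2*(i-j)+3*k) % 6 = 2 then v2
  else if (2*(i-j)+3*k) % 6 = 4 then v3
  else if (2*(i-j)+3*k) % 6 = 1 then v4
  else if (2*(i-j)+3*k) % 6 = 3 then v5
  else v6

/-- α(i,j,k) = ⌊(P+i+2j)/3⌋ with P = i²+ij+j²+1. -/
def expA (i j : ℤ) : ℤ := Int.fdiv ((i^2+i*j+j^2+1) + i + 2*j) 3
/-- β(i,j,k) = ⌊(P+2i+j)/3⌋. -/
def expB (i j : ℤ) : ℤ := Int.fdiv ((i^2+i*j+j^2+1) + 2*i + j) 3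
/-- γ(i,j,k) = ⌊P/3⌋. -/
def expC (i j : ℤ) : ℤ := Int.fdiv (i^2+i*j+j^2+1) 3
/-- δ(i,j,k) = ⌊(k−1)²/4⌋. -/
def expD (k : ℤ) : ℤ := Int.fdiv ((k-1)^2) 4
/-- ε(i,j,k) = ⌊k²/4⌋. -/
def expE (k : ℤ) : ℤ := Int.fdiv (k^2) 4

def Y1'' : F := (x6^4 + x1*x2*x3*x6 + 2*x4*x5*x6^2 + x4^2*x5^2) / (x1*x3*x4)
def Y3'' : F := (x4*x5 + x6^2) / x3
def Y4'' : F := (x1*x2*x3 + x4*x5*x6 + x6^3) / (x3*x4)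

def A4 : F := x1 / x2
def B4 : F := x3 / x1
def C4 : F := (x6^6 + 2*x1*x2*x3*x6^3 + x1^2*x2^2*x3^2 + 3*x4*x5*x6^4
    + 2*x1*x2*x3*x4*x5*x6 + 3*x4^2*x5^2*x6^2 + x4^3*x5^3) / (x1*x3^2*x4*x5*x6)
def D4 : F := x4 / x5
def E4 : F := (x6^6 + 2*x1*x2*x3*x6^3 + x1^2*x2^2*x3^2 + 3*x4*x5*x6^4
    + 3*x1*x2*x3*x4*x5*x6 + 3*x4^2*x5^2*x6^2 + x4^3*x5^3) / (x1*x2*x3*x4^2*x6)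

/-- The Model 4 closed formula Z₄(i,j,k) of Theorem 3.4. -/
def Z4 (i j k : ℤ) : F :=
  pick Y1'' x2 Y3'' Y4'' x5 x6 i j k *
    A4 ^ expA i j * B4 ^ expB i j * C4 ^ expC i j * D4 ^ expD k * E4 ^ expE k

-- The Model 1 coefficients of Theorem 3.1 with x₁ ↦ Y₁'', x₃ ↦ Y₃'', x₄ ↦ Y₄''.
def A' : F := (Y3''*x5 + Y4''*x6) / (Y1''*x2)
def B' : F := (Y1''*x6 + x2*x5) / (Y3''*Y4'')
def C' : F := (Y1''*Y3'' + x2*Y4'') / (x5*x6)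
def D' : F := (Y1''*Y3''*x6 + x2*Y3''*x5 + x2*Y4''*x6) / (Y1''*Y4''*x5)
def E' : F := (x2*Y4''*x5 + Y1''*Y3''*x5 + Y1''*Y4''*x6) / (x2*Y3''*x6)

lemma algMap_ne_zero {p : MvPolynomial (Fin 6) ℚ} (hp : p ≠ 0) :
    algebraMap (MvPolynomial (Fin 6) ℚ) F p ≠ 0 := by
  rwa [Ne, map_eq_zero_iff _ (IsFractionRing.injective (MvPolynomial (Fin 6) ℚ) F)]

lemma poly_ne_zero (p : MvPolynomial (Fin 6) ℚ) (h : MvPolynomial.eval (fun _ => (1:ℚ)) p ≠ 0) :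
    algebraMap (MvPolynomial (Fin 6) ℚ) F p ≠ 0 := by
  refine algMap_ne_zero fun h0 => h ?_
  rw [h0]; simp

lemma hx (t : Fin 6) : xv t ≠ 0 := by
  unfold xv
  exact algMap_ne_zero (MvPolynomial.X_ne_zero t)

lemma hx1 : x1 ≠ 0 := hx 0
lemma hx2 : x2 ≠ 0 := hx 1
lemma hx3 : x3 ≠ 0 := hx 2
lemma hx4 : x4 ≠ 0 := hx 3
lemma hx5 : x5 ≠ 0 := hx 4
lemma hx6 : x6 ≠ 0 := hx 5

lemma hN1 : x6^4 + x1*x2*x3*x6 + 2*x4*x5*x6^2 + x4^2*x5^2 ≠ 0 := by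
  have := poly_ne_zero ((X 5)^4 + X 0*X 1*X 2*X 5 + 2*X 3*X 4*(X 5)^2 + (X 3)^2*(X 4)^2)
    (by norm_num)
  simpa [x1, x2, x3, x4, x5, x6, xv, map_add, map_mul, map_pow, map_ofNat] using this

lemma hN3 : x4*x5 + x6^2 ≠ 0 := by
  have := poly_ne_zero (X 3*X 4 + (X 5)^2) (by norm_num)
  simpa [x4, x5, x6, xv, map_add, map_mul, map_pow] using this

lemma hN4 : x1*x2*x3 + x4*x5*x6 + x6^3 ≠ 0 := by
  have := poly_ne_zero (X 0*X 1*X 2 + X 3*X 4*X 5 + (X 5)^3) (by norm_num)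
  simpa [x1, x2, x3, x4, x5, x6, xv, map_add, map_mul, map_pow] using this

lemma hY1 : Y1'' ≠ 0 := by
  unfold Y1''
  exact div_ne_zero hN1 (by simp [hx1, hx3, hx4])

lemma hY3 : Y3'' ≠ 0 := by
  unfold Y3''
  exact div_ne_zero hN3 hx3

lemma hY4 : Y4'' ≠ 0 := by
  unfold Y4''
  exact div_ne_zero hN4 (by simp [hx3, hx4])

lemma baseA : A' = A4 := by
  have h1 := hx1; have h2 := hx2; have h3 := hx3; have h4 := hx4; have h5 := hx5
  have h6 := hx6; have hn1 := hN1; have hn3 := hN3; have hn4 := hN4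
  unfold A' A4 Y1'' Y3'' Y4''
  field_simp
  rw [div_eq_one_iff_eq (fun h => hn1 (by linear_combination h))]
  ring

lemma baseB : B' = B4 := by
  have h1 := hx1; have h2 := hx2; have h3 := hx3; have h4 := hx4; have h5 := hx5
  have h6 := hx6; have hn1 := hN1; have hn3 := hN3; have hn4 := hN4
  unfold B' B4
  rw [div_eq_div_iff (by simp [hY3, hY4]) hx1]
  unfold Y1'' Y3'' Y4''
  field_simp
  ring

lemma baseC : C' = C4 := by
  have h1 := hx1; have h2 := hx2; have h3 := hx3; have h4 := hx4; have h5 := hx5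
  have h6 := hx6; have hn1 := hN1; have hn3 := hN3; have hn4 := hN4
  unfold C' C4 Y1'' Y3'' Y4''
  rw [div_mul_div_comm, ← mul_div_assoc,
    div_add_div _ _ (by simp [h1,h3,h4] : x1*x3*x4*x3 ≠ (0:F)) (by simp [h3,h4] : x3*x4 ≠ (0:F)),
    div_div, div_eq_div_iff (by simp [h1,h3,h4,h5,h6]) (by simp [h1,h3,h4,h5,h6])]
  ring

lemma baseD : D' = D4 := by
  have h1 := hx1; have h2 := hx2; have h3 := hx3; have h4 := hx4; have h5 := hx5
  have h6 := hx6; have hn1 := hN1; have hn3 := hN3; have hn4 := hN4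
  unfold D' D4 Y1'' Y3'' Y4''
  simp only [div_mul_div_comm, div_mul_eq_mul_div, ← mul_div_assoc, div_div]
  rw [div_add_div _ _ (by simp [h1,h3,h4] : x1*x3*x4*x3 ≠ (0:F)) (by simp [h3] : x3 ≠ (0:F)),
    div_add_div _ _ (by simp [h1,h3,h4] : x1*x3*x4*x3*x3 ≠ (0:F)) (by simp [h3,h4] : x3*x4 ≠ (0:F)),
    div_div_eq_mul_div, div_mul_eq_mul_div, div_div,
    div_eq_div_iff (by simp [h1,h2,h3,h4,h5,h6,hn1,hn3,hn4]) h5]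
  ring

lemma baseE : E' = E4 := by
  have h1 := hx1; have h2 := hx2; have h3 := hx3; have h4 := hx4; have h5 := hx5
  have h6 := hx6; have hn1 := hN1; have hn3 := hN3; have hn4 := hN4
  unfold E' E4 Y1'' Y3'' Y4''
  simp only [div_mul_div_comm, div_mul_eq_mul_div, ← mul_div_assoc, div_div]
  rw [div_add_div _ _ (by simp [h3,h4] : x3*x4 ≠ (0:F)) (by simp [h1,h3,h4] : x1*x3*x4*x3 ≠ (0:F)),
    div_add_div _ _ (by simp [h1,h3,h4] : x3*x4*(x1*x3*x4*x3) ≠ (0:F))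
      (by simp [h1,h3,h4] : x1*x3*x4*(x3*x4) ≠ (0:F)),
    div_div_eq_mul_div, div_mul_eq_mul_div, div_div,
    div_eq_div_iff (by simp [h1,h2,h3,h4,h5,h6,hn1,hn3,hn4]) (by simp [h1,h2,h3,h4,h6])]
  ring

/-- Theorem 3.4 (algebraic formula for Model 4, substitution form). -/
theorem model4_substitution_form (i j k : ℤ) :
    Z4 i j k =
      pick Y1'' x2 Y3'' Y4'' x5 x6 i j k *
        A' ^ expA i j * B' ^ expB i j * C' ^ expC i j * D' ^ expD k * E' ^ expE k := by
  rw [Z4, baseA, baseB, baseC, baseD, baseE]
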